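/- Let f(x)|𝒜 ~ N(f̂(x), s(x)²) pointwise for x in a measurable space (D, μ) with μ a finite measure. Then the expected measure of the symmetric difference between S = {x : f(x) ≥ 0} and Ŝ = {x : f̂(x) ≥ 0} satisfies E[μ(S Δ Ŝ)] = ∫_D Φ(−|f̂(x)|/s(x)) μ(dx), provided μ({x : f̂(x) = 0}) = 0 and s(x) > 0 for all x. -/

import Mathlib

open MeasureTheory ProbabilityTheory Real

/-- The standard normal cumulative distribution function. -/
noncomputable def stdNormalCDF (z : ℝ) : ℝ :=
  ∫ t in Set.Iic z, Real.exp (-t ^ 2 / 2) / Real.sqrt (2 * Real.pi)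

lemma stdNormalCDF_eq (z : ℝ) : stdNormalCDF z = ∫ t in Set.Iic z, gaussianPDFReal 0 1 t := by
  have : (fun t : ℝ => Real.exp (-t ^ 2 / 2) / Real.sqrt (2 * Real.pi))
      = gaussianPDFReal 0 1 := by
    ext t; simp [gaussianPDFReal, div_eq_inv_mul, mul_comm]
  rw [stdNormalCDF, this]

lemma integral_stdPDF : ∫ t : ℝ, gaussianPDFReal 0 1 t = 1 :=
  integral_gaussianPDFReal_eq_one 0 one_ne_zero

lemma stdNormalCDF_nonneg (z : ℝ) : 0 ≤ stdNormalCDF z := by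
  rw [stdNormalCDF_eq]
  exact setIntegral_nonneg measurableSet_Iic fun t _ => gaussianPDFReal_nonneg 0 1 t

lemma stdNormalCDF_le_one (z : ℝ) : stdNormalCDF z ≤ 1 := by
  rw [stdNormalCDF_eq, ← integral_stdPDF]
  exact setIntegral_le_integral (integrable_gaussianPDFReal 0 1)
    (Filter.Eventually.of_forall fun t => gaussianPDFReal_nonneg 0 1 t)

lemma stdNormalCDF_monotone : Monotone stdNormalCDF := by
  intro a b hab
  rw [stdNormalCDF_eq, stdNormalCDF_eq]
  exact setIntegral_mono_set (integrable_gaussianPDFReal 0 1).integrableOn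
    (Filter.Eventually.of_forall fun t => gaussianPDFReal_nonneg 0 1 t)
    (Filter.Eventually.of_forall (Set.Iic_subset_Iic.mpr hab))

lemma stdNormalCDF_measurable : Measurable stdNormalCDF :=
  stdNormalCDF_monotone.measurable

lemma stdNormalCDF_neg (z : ℝ) : stdNormalCDF (-z) = 1 - stdNormalCDF z := by
  have heven : ∀ t : ℝ, gaussianPDFReal 0 1 (-t) = gaussianPDFReal 0 1 t := by
    intro t; simp [gaussianPDFReal, neg_sq]
  have h1 : stdNormalCDF (-z) = ∫ t in Set.Ioi z, gaussianPDFReal 0 1 t := by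
    rw [stdNormalCDF_eq]
    rw [show (∫ t in Set.Iic (-z), gaussianPDFReal 0 1 t)
        = ∫ t in Set.Iic (-z), gaussianPDFReal 0 1 (-t) by
      exact setIntegral_congr_fun measurableSet_Iic fun t _ => (heven t).symm]
    rw [integral_comp_neg_Iic, neg_neg]
  have h2 : (∫ t in Set.Iic z, gaussianPDFReal 0 1 t) + ∫ t in Set.Ioi z, gaussianPDFReal 0 1 t
      = 1 := by
    rw [← integral_stdPDF]
    rw [← setIntegral_union (Set.Iic_disjoint_Ioi le_rfl) measurableSet_Ioi
      (integrable_gaussianPDFReal 0 1).integrableOn (integrable_gaussianPDFReal 0 1).integrableOn,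
      Set.Iic_union_Ioi, setIntegral_univ]
  rw [h1, stdNormalCDF_eq]
  linarith

lemma gaussianReal_Iic (m : ℝ) {σ : ℝ} (hσ : 0 < σ) (a : ℝ) :
    (gaussianReal m ⟨σ ^ 2, sq_nonneg σ⟩) (Set.Iic a)
      = ENNReal.ofReal (stdNormalCDF ((a - m) / σ)) := by
  have hv : (⟨σ ^ 2, sq_nonneg σ⟩ : NNReal) ≠ 0 := by
    intro h
    exact (pow_pos hσ 2).ne' (congrArg NNReal.toReal h)
  have hmap : gaussianReal m (⟨σ ^ 2, sq_nonneg σ⟩ : NNReal)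
      = (gaussianReal 0 1).map (fun x => σ * x + m) := by
    have h1 := gaussianReal_map_const_mul (μ := 0) (v := 1) σ
    have h2 := gaussianReal_map_add_const (μ := 0) (v := .mk (σ ^ 2) (sq_nonneg _)) m
    rw [mul_zero, mul_one] at h1
    rw [show (fun x : ℝ => σ * x + m) = (· + m) ∘ (σ * ·) from rfl,
      ← Measure.map_map (measurable_add_const m) (measurable_const_mul σ), h1, h2, zero_add]
    rfl
  have hpre : (fun x : ℝ => σ * x + m) ⁻¹' Set.Iic a = Set.Iic ((a - m) / σ) := by
    ext x
    simp only [Set.mem_preimage, Set.mem_Iic]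
    rw [le_div_iff₀ hσ]
    constructor <;> intro h <;> nlinarith
  rw [hmap, Measure.map_apply (by fun_prop) measurableSet_Iic, hpre,
    gaussianReal_apply_eq_integral 0 one_ne_zero, stdNormalCDF_eq]

lemma gaussianReal_Iio (m : ℝ) {σ : ℝ} (hσ : 0 < σ) (a : ℝ) :
    (gaussianReal m ⟨σ ^ 2, sq_nonneg σ⟩) (Set.Iio a)
      = ENNReal.ofReal (stdNormalCDF ((a - m) / σ)) := by
  have hv : (⟨σ ^ 2, sq_nonneg σ⟩ : NNReal) ≠ 0 := by
    intro h
    exact (pow_pos hσ 2).ne' (congrArg NNReal.toReal h)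
  have h0 : (gaussianReal m ⟨σ ^ 2, sq_nonneg σ⟩) {a} = 0 :=
    gaussianReal_absolutelyContinuous m hv (measure_singleton a)
  rw [← gaussianReal_Iic m hσ a]
  refine le_antisymm (measure_mono Set.Iio_subset_Iic_self) ?_
  calc (gaussianReal m ⟨σ ^ 2, sq_nonneg σ⟩) (Set.Iic a)
      = (gaussianReal m ⟨σ ^ 2, sq_nonneg σ⟩) (Set.Iio a ∪ {a}) := by rw [Set.Iio_union_right]
    _ ≤ (gaussianReal m ⟨σ ^ 2, sq_nonneg σ⟩) (Set.Iio a)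
        + (gaussianReal m ⟨σ ^ 2, sq_nonneg σ⟩) {a} := measure_union_le _ _
    _ = (gaussianReal m ⟨σ ^ 2, sq_nonneg σ⟩) (Set.Iio a) := by rw [h0, add_zero]

lemma gaussianReal_Ici (m : ℝ) {σ : ℝ} (hσ : 0 < σ) (a : ℝ) :
    (gaussianReal m ⟨σ ^ 2, sq_nonneg σ⟩) (Set.Ici a)
      = ENNReal.ofReal (stdNormalCDF ((m - a) / σ)) := by
  have : IsProbabilityMeasure (gaussianReal m (⟨σ ^ 2, sq_nonneg σ⟩ : NNReal)) :=
    instIsProbabilityMeasureGaussianReal _ _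
  have huniv : (gaussianReal m (⟨σ ^ 2, sq_nonneg σ⟩ : NNReal)) Set.univ = 1 := measure_univ
  rw [← Set.compl_Iio, measure_compl measurableSet_Iio (measure_ne_top _ _), huniv,
    gaussianReal_Iio m hσ a,
    show (m - a) / σ = -((a - m) / σ) by rw [← neg_div, neg_sub], stdNormalCDF_neg]
  rw [ENNReal.ofReal_sub _ (stdNormalCDF_nonneg _), ENNReal.ofReal_one]

/-- If `f(x) | data ~ N(f̂(x), s(x)²)` pointwise, then the expected measure of the
symmetric difference between `S = {f ≥ 0}` and `Ŝ = {f̂ ≥ 0}` is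
`∫ Φ(−|f̂(x)|/s(x)) μ(dx)`, provided `μ{f̂ = 0} = 0` and `s > 0`. -/
theorem expected_symmDiff_measure
    {Ω : Type*} [MeasurableSpace Ω] (P : Measure Ω) [IsProbabilityMeasure P]
    {D : Type*} [MeasurableSpace D] (μ : Measure D) [IsFiniteMeasure μ]
    (f : Ω → D → ℝ) (fhat s : D → ℝ)
    (hf : Measurable (Function.uncurry f))
    (hfhat : Measurable fhat) (hsmeas : Measurable s)
    (hs : ∀ x, 0 < s x)
    (hgauss : ∀ x, Measure.map (fun ω => f ω x) P
      = gaussianReal (fhat x) ⟨(s x) ^ 2, sq_nonneg (s x)⟩)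
    (hzero : μ {x | fhat x = 0} = 0) :
    ∫ ω, (μ (symmDiff {x | 0 ≤ f ω x} {x | 0 ≤ fhat x})).toReal ∂P
      = ∫ x, stdNormalCDF (-|fhat x| / s x) ∂μ := by
  set A : Set (Ω × D) := {p | 0 ≤ Function.uncurry f p} with hAdef
  set B : Set (Ω × D) := {p | 0 ≤ fhat p.2} with hBdef
  set T : Set (Ω × D) := (A \ B) ∪ (B \ A) with hTdef
  have hA : MeasurableSet A := measurableSet_le measurable_const hf
  have hB : MeasurableSet B := measurableSet_le measurable_const (hfhat.comp measurable_snd)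
  have hT : MeasurableSet T := (hA.diff hB).union (hB.diff hA)
  have hsymm : ∀ ω, symmDiff {x | 0 ≤ f ω x} {x | 0 ≤ fhat x} = Prod.mk ω ⁻¹' T := by
    intro ω
    ext x
    simp only [hTdef, hAdef, hBdef, Set.mem_symmDiff, Set.mem_preimage, Set.mem_union,
      Set.mem_diff, Set.mem_setOf_eq, Function.uncurry]
  have hae : ∀ᵐ x ∂μ, fhat x ≠ 0 := by
    rw [ae_iff]
    simpa using hzero
  have hpt : ∀ x, fhat x ≠ 0 →
      P ((fun ω => (ω, x)) ⁻¹' T) = ENNReal.ofReal (stdNormalCDF (-|fhat x| / s x)) := by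
    intro x hx
    have hX : Measurable fun ω => f ω x := hf.comp measurable_prodMk_right
    rcases hx.lt_or_gt with h | h
    · have hset : (fun ω => (ω, x)) ⁻¹' T = (fun ω => f ω x) ⁻¹' Set.Ici 0 := by
        ext ω
        simp [hTdef, hAdef, hBdef, Function.uncurry, not_le.mpr h]
      rw [hset, ← Measure.map_apply hX measurableSet_Ici, hgauss x,
        gaussianReal_Ici (fhat x) (hs x) 0, sub_zero, abs_of_neg h, neg_neg]
    · have hset : (fun ω => (ω, x)) ⁻¹' T = (fun ω => f ω x) ⁻¹' Set.Iio 0 := by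
        ext ω
        simp only [hTdef, hAdef, hBdef, Set.mem_preimage, Set.mem_union, Set.mem_diff,
          Set.mem_setOf_eq, Set.mem_Iio, Function.uncurry_apply_pair]
        constructor
        · rintro (⟨_, hb⟩ | ⟨_, hb⟩)
          · exact absurd h.le hb
          · exact not_le.mp hb
        · intro hlt
          exact Or.inr ⟨h.le, not_le.mpr hlt⟩
      rw [hset, ← Measure.map_apply hX measurableSet_Iio, hgauss x,
        gaussianReal_Iio (fhat x) (hs x) 0, zero_sub, abs_of_pos h, neg_div]
  have hgmeas : Measurable fun x => stdNormalCDF (-|fhat x| / s x) :=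
    stdNormalCDF_measurable.comp ((hfhat.abs.neg).div hsmeas)
  have hgint : Integrable (fun x => stdNormalCDF (-|fhat x| / s x)) μ := by
    refine (integrable_const (1 : ℝ)).mono' hgmeas.aestronglyMeasurable
      (Filter.Eventually.of_forall fun x => ?_)
    rw [Real.norm_eq_abs, abs_of_nonneg (stdNormalCDF_nonneg _)]
    exact stdNormalCDF_le_one _
  calc ∫ ω, (μ (symmDiff {x | 0 ≤ f ω x} {x | 0 ≤ fhat x})).toReal ∂P
      = ∫ ω, (μ (Prod.mk ω ⁻¹' T)).toReal ∂P := by simp_rw [hsymm]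
    _ = (∫⁻ ω, μ (Prod.mk ω ⁻¹' T) ∂P).toReal :=
        integral_toReal (measurable_measure_prodMk_left hT).aemeasurable
          (Filter.Eventually.of_forall fun ω => measure_lt_top μ _)
    _ = ((P.prod μ) T).toReal := by rw [Measure.prod_apply hT]
    _ = (∫⁻ x, P ((fun ω => (ω, x)) ⁻¹' T) ∂μ).toReal := by rw [Measure.prod_apply_symm hT]
    _ = (∫⁻ x, ENNReal.ofReal (stdNormalCDF (-|fhat x| / s x)) ∂μ).toReal := by
        rw [lintegral_congr_ae (hae.mono fun x hx => hpt x hx)]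
    _ = (ENNReal.ofReal (∫ x, stdNormalCDF (-|fhat x| / s x) ∂μ)).toReal := by
        rw [ofReal_integral_eq_lintegral_ofReal hgint
          (Filter.Eventually.of_forall fun x => stdNormalCDF_nonneg _)]
    _ = ∫ x, stdNormalCDF (-|fhat x| / s x) ∂μ :=
        ENNReal.toReal_ofReal (integral_nonneg fun x => stdNormalCDF_nonneg _)
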